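/- Let n ≥ 2, let f : ℝ → ℝⁿ be a topological embedding with image C (a self-avoiding complete curve), and let w ∈ ℝⁿ be a nonzero vector with w + C = C. Then there exists a bounded subset B ⊆ C such that C is the disjoint union of the translates kw + B for k ∈ ℤ. -/

import Mathlib

open Filter Topology

private lemma core_partition {n : ℕ} (f : ℝ → EuclideanSpace ℝ (Fin n))
    (hf : Topology.IsEmbedding f) (w : EuclideanSpace ℝ (Fin n))
    (e : Equiv.Perm ℝ) (hmono : StrictMono ⇑e)
    (hspec : ∀ (k : ℤ) (t : ℝ), f ((e ^ k) t) = (k : ℝ) • w + f t)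
    (hpos : ∀ t, t < e t) :
    ∃ B ⊆ Set.range f, Bornology.IsBounded B ∧
      ∀ x, x ∈ Set.range f ↔ ∃! k : ℤ, ∃ b ∈ B, x = (k : ℝ) • w + b := by
  classical
  have hsymm : StrictMono ⇑e.symm := fun a b h => hmono.lt_iff_lt.mp (by simpa using h)
  have hpow : ∀ k : ℤ, StrictMono ⇑(e ^ k) := by
    intro k
    induction k using Int.induction_on with
    | zero => simpa using strictMono_id
    | succ k ih =>
        have h1 : e ^ ((k : ℤ) + 1) = e * e ^ (k : ℤ) := by group
        rw [h1]
        exact hmono.comp ih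
    | pred k ih =>
        have h1 : e ^ (-(k : ℤ) - 1) = e⁻¹ * e ^ (-(k : ℤ)) := by group
        rw [h1]
        have h2 : ⇑(e⁻¹) = ⇑e.symm := rfl
        exact (h2 ▸ hsymm).comp ih
  set s : ℤ → ℝ := fun k => (e ^ k) 0 with hs_def
  have hstep : ∀ k : ℤ, s (k + 1) = e (s k) := by
    intro k
    have h1 : e ^ (k + 1) = e * e ^ k := by group
    simp only [hs_def, h1, Equiv.Perm.mul_apply]
  have hs : StrictMono s := strictMono_int_of_lt_succ fun k => by
    rw [hstep k]; exact hpos (s k)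
  -- continuity of e and e.symm
  have hce : Continuous ⇑e := by
    rw [hf.continuous_iff]
    have h1 : f ∘ ⇑e = fun t => w + f t := funext fun t => by simpa using hspec 1 t
    rw [h1]
    exact continuous_const.add hf.continuous
  have hcs : Continuous ⇑e.symm := by
    rw [hf.continuous_iff]
    have h1 : f ∘ ⇑e.symm = fun t => (-1 : ℝ) • w + f t := funext fun t => by
      have := hspec (-1) t
      simpa using this
    rw [h1]
    exact continuous_const.add hf.continuous
  -- no fixed point of e
  have hnofix : ∀ t, e t ≠ t := fun t h => absurd (hpos t) (by rw [h]; exact lt_irrefl t)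
  -- upward unboundedness
  have up : ∀ t : ℝ, ∃ m : ℕ, t < s m := by
    intro t
    by_contra h
    push_neg at h
    have hmonou : Monotone fun m : ℕ => s m :=
      fun a b hab => hs.monotone (by exact_mod_cast hab)
    rcases tendsto_of_monotone hmonou with h1 | ⟨l, hl⟩
    · obtain ⟨m, hm⟩ := (h1.eventually_gt_atTop t).exists
      exact absurd (h m) (not_le.mpr hm)
    · have heq : ((fun m : ℕ => s m) ∘ fun n => n + 1) = fun m : ℕ => e (s m) :=
        funext fun m => by
          show s ((m + 1 : ℕ) : ℤ) = _
          rw [show ((m + 1 : ℕ) : ℤ) = (m : ℤ) + 1 by push_cast; ring, hstep m]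
      have h2 := hl.comp (tendsto_add_atTop_nat 1)
      rw [heq] at h2
      have h4 : Tendsto (fun m : ℕ => e (s m)) atTop (𝓝 (e l)) :=
        (hce.tendsto l).comp hl
      exact hnofix l (tendsto_nhds_unique h4 h2)
  have down : ∀ t : ℝ, ∃ m : ℕ, s (-(m : ℤ)) ≤ t := by
    intro t
    by_contra h
    push_neg at h
    have hant : Antitone fun m : ℕ => s (-(m : ℤ)) := fun a b hab =>
      hs.monotone (by exact_mod_cast neg_le_neg (Int.ofNat_le.mpr hab))
    rcases tendsto_of_antitone hant with h1 | ⟨l, hl⟩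
    · obtain ⟨m, hm⟩ := (h1.eventually_lt_atBot t).exists
      exact absurd (h m) (not_lt.mpr hm.le)
    · have hstep' : ∀ m : ℕ, s (-((m : ℤ) + 1)) = e.symm (s (-(m : ℤ))) := by
        intro m
        have h0 : s (-(m : ℤ)) = e (s (-(m : ℤ) - 1)) := by
          have := hstep (-(m : ℤ) - 1)
          rw [show -(m : ℤ) - 1 + 1 = -(m : ℤ) by ring] at this
          exact this
        rw [show -((m : ℤ) + 1) = -(m : ℤ) - 1 by ring, h0]
        simp
      have heq : ((fun m : ℕ => s (-(m : ℤ))) ∘ fun n => n + 1)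
          = fun m : ℕ => e.symm (s (-(m : ℤ))) :=
        funext fun m => by
          show s (-((m + 1 : ℕ) : ℤ)) = _
          rw [show -((m + 1 : ℕ) : ℤ) = -((m : ℤ) + 1) by push_cast; ring, hstep' m]
      have h2 := hl.comp (tendsto_add_atTop_nat 1)
      rw [heq] at h2
      have h4 : Tendsto (fun m : ℕ => e.symm (s (-(m : ℤ)))) atTop (𝓝 (e.symm l)) :=
        (hcs.tendsto l).comp hl
      have h5 : e.symm l = l := tendsto_nhds_unique h4 h2
      exact hnofix l (by rw [← h5, Equiv.apply_symm_apply]; exact h5.symm)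
  -- bracketing
  have key : ∀ t : ℝ, ∃! k : ℤ, s k ≤ t ∧ t < s (k + 1) := by
    intro t
    obtain ⟨M, hM⟩ := up t
    obtain ⟨m, hm⟩ := down t
    obtain ⟨k, hk, hmax⟩ := Int.exists_greatest_of_bdd
      (P := fun z => s z ≤ t)
      ⟨M, fun z hz => (hs.lt_iff_lt.mp (lt_of_le_of_lt hz hM)).le⟩
      ⟨-(m : ℤ), hm⟩
    have hk1 : t < s (k + 1) := by
      by_contra h
      push_neg at h
      exact absurd (hmax (k + 1) h) (by omega)
    refine ⟨k, ⟨hk, hk1⟩, ?_⟩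
    rintro y ⟨hy1, hy2⟩
    by_contra hne
    rcases lt_or_gt_of_ne hne with h | h
    · have : y + 1 ≤ k := by omega
      exact absurd (lt_of_lt_of_le hy2 (hs.monotone this |>.trans hk)) (lt_irrefl t)
    · have : k + 1 ≤ y := by omega
      exact absurd (lt_of_lt_of_le hk1 ((hs.monotone this).trans hy1)) (lt_irrefl t)
  -- the fundamental domain
  refine ⟨f '' Set.Ico 0 (e 0), Set.image_subset_range f _, ?_, ?_⟩
  · have hsub : f '' Set.Ico 0 (e 0) ⊆ f '' Set.Icc 0 (e 0) :=
      Set.image_mono Set.Ico_subset_Icc_self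
    exact ((isCompact_Icc.image hf.continuous).isBounded).subset hsub
  · intro x
    constructor
    · rintro ⟨t, rfl⟩
      obtain ⟨k, ⟨hk1, hk2⟩, huniq⟩ := key t
      have hzpow1 : (e ^ (-k)) (s k) = 0 := by
        show (e ^ (-k)) ((e ^ k) 0) = 0
        rw [← Equiv.Perm.mul_apply, ← zpow_add]
        simp
      have hzpow2 : (e ^ (-k)) (s (k + 1)) = e 0 := by
        show (e ^ (-k)) ((e ^ (k + 1)) 0) = e 0
        rw [← Equiv.Perm.mul_apply, ← zpow_add]
        have : -k + (k + 1) = 1 := by ring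
        rw [this, zpow_one]
      set u := (e ^ (-k)) t with hu
      have hu1 : 0 ≤ u := hzpow1 ▸ ((hpow (-k)).monotone hk1)
      have hu2 : u < e 0 := hzpow2 ▸ ((hpow (-k)) hk2)
      have hback : (e ^ k) u = t := by
        rw [hu, ← Equiv.Perm.mul_apply, ← zpow_add]
        simp
      refine ⟨k, ⟨f u, ⟨u, ⟨hu1, hu2⟩, rfl⟩, ?_⟩, ?_⟩
      · rw [← hspec k u, hback]
      · rintro y ⟨b, ⟨v, hv, rfl⟩, hxy⟩
        have : f t = f ((e ^ y) v) := by rw [hspec y v, hxy]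
        have htv : t = (e ^ y) v := hf.injective this
        have h1 : s y ≤ t := by
          rw [htv]
          have : (e ^ y) 0 ≤ (e ^ y) v := (hpow y).monotone hv.1
          exact this
        have h2 : t < s (y + 1) := by
          rw [htv]
          have hlt : (e ^ y) v < (e ^ y) (e 0) := hpow y hv.2
          have : (e ^ y) (e 0) = s (y + 1) := by
            show (e ^ y) (e 0) = (e ^ (y + 1)) 0
            rw [zpow_add_one, Equiv.Perm.mul_apply]
          rwa [this] at hlt
        exact huniq y ⟨h1, h2⟩
    · rintro ⟨k, ⟨b, ⟨v, hv, rfl⟩, hxy⟩, -⟩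
      exact ⟨(e ^ k) v, by rw [hspec k v, hxy]⟩

theorem translation_invariant_curve_partition (n : ℕ) (hn : 2 ≤ n)
    (f : ℝ → EuclideanSpace ℝ (Fin n)) (hf : Topology.IsEmbedding f)
    (C : Set (EuclideanSpace ℝ (Fin n))) (hC : C = Set.range f)
    (w : EuclideanSpace ℝ (Fin n)) (hw : w ≠ 0)
    (hinv : (fun x => w + x) '' C = C) :
    ∃ B ⊆ C, Bornology.IsBounded B ∧
      ∀ x, x ∈ C ↔ ∃! k : ℤ, ∃ b ∈ B, x = (k : ℝ) • w + b := by
  classical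
  subst hC
  -- translation maps the range into itself, in both directions
  have hmem : ∀ t : ℝ, w + f t ∈ Set.range f := fun t => by
    rw [← hinv]; exact ⟨f t, Set.mem_range_self t, rfl⟩
  have hmem' : ∀ t : ℝ, -w + f t ∈ Set.range f := fun t => by
    have h0 : f t ∈ (fun x => w + x) '' Set.range f := by
      rw [hinv]; exact Set.mem_range_self t
    obtain ⟨z, hz, hzz⟩ := h0
    have : -w + f t = z := by rw [← hzz]; exact neg_add_cancel_left w z
    rwa [this]
  -- build the conjugated self-homeomorphism of ℝ
  set g : ℝ → ℝ := fun t => (hmem t).choose with hg_def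
  set g' : ℝ → ℝ := fun t => (hmem' t).choose with hg'_def
  have hg : ∀ t, f (g t) = w + f t := fun t => (hmem t).choose_spec
  have hg' : ∀ t, f (g' t) = -w + f t := fun t => (hmem' t).choose_spec
  have hgg' : ∀ t, g (g' t) = t := fun t => hf.injective (by rw [hg, hg']; abel)
  have hg'g : ∀ t, g' (g t) = t := fun t => hf.injective (by rw [hg', hg]; abel)
  set e : Equiv.Perm ℝ := ⟨g, g', hg'g, hgg'⟩ with he_def
  have hce : Continuous g := by
    rw [hf.continuous_iff]
    have h1 : f ∘ g = fun t => w + f t := funext fun t => hg t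
    rw [h1]; exact continuous_const.add hf.continuous
  -- f ∘ e^k = translation by k • w
  have hspec : ∀ (k : ℤ) (t : ℝ), f ((e ^ k) t) = (k : ℝ) • w + f t := by
    intro k
    induction k using Int.induction_on with
    | zero => intro t; simp
    | succ k ih =>
        intro t
        have h1 : e ^ ((k : ℤ) + 1) = e ^ (k : ℤ) * e := zpow_add_one e k
        rw [h1, Equiv.Perm.mul_apply, show e t = g t from rfl, ih, hg]
        push_cast
        rw [add_smul, one_smul]
        abel
    | pred k ih =>
        intro t
        have h1 : e ^ (-(k : ℤ) - 1) = e ^ (-(k : ℤ)) * e⁻¹ := by group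
        have h2 : ⇑(e⁻¹) = g' := rfl
        rw [h1, Equiv.Perm.mul_apply, show (e⁻¹) t = g' t from rfl, ih, hg']
        push_cast
        rw [sub_smul, one_smul]
        abel
  -- no fixed points
  have hnofix : ∀ t, g t ≠ t := by
    intro t h
    have h1 : f t = w + f t := by rw [← hg, h]
    have h2 : w = 0 := by
      have := congrArg (fun y => y - f t) h1
      simpa using this.symm
    exact hw h2
  -- IVT helper : F = g - id never vanishes
  set F : ℝ → ℝ := fun t => g t - t with hF_def
  have hFc : Continuous F := hce.sub continuous_id
  have hzero : ∀ a b : ℝ, a ≤ b →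
      (F a ≤ 0 ∧ 0 ≤ F b) ∨ (0 ≤ F a ∧ F b ≤ 0) → False := by
    intro a b hab hcase
    have hex : ∃ c ∈ Set.Icc a b, F c = 0 := by
      rcases hcase with ⟨h1, h2⟩ | ⟨h1, h2⟩
      · obtain ⟨c, hc, hc0⟩ := intermediate_value_Icc hab hFc.continuousOn ⟨h1, h2⟩
        exact ⟨c, hc, hc0⟩
      · obtain ⟨c, hc, hc0⟩ := intermediate_value_Icc' hab hFc.continuousOn ⟨h2, h1⟩
        exact ⟨c, hc, hc0⟩
    obtain ⟨c, -, hc0⟩ := hex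
    exact hnofix c (sub_eq_zero.mp hc0)
  have hF : ∀ t, F t = g t - t := fun t => rfl
  -- g is strictly monotone
  have hmono : StrictMono g := by
    rcases hce.strictMono_of_inj (Equiv.injective e) with h | h
    · exact h
    · exfalso
      rcases lt_trichotomy (g 0) 0 with h0 | h0 | h0
      · refine hzero (g 0) 0 h0.le (Or.inr ⟨?_, ?_⟩)
        · have := h h0
          rw [hF]; linarith
        · rw [hF]; linarith
      · exact hnofix 0 h0
      · refine hzero 0 (g 0) h0.le (Or.inr ⟨?_, ?_⟩)
        · rw [hF]; linarith
        · have := h h0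
          rw [hF]; linarith
  -- the displacement has constant sign
  have hsign : (∀ t, t < g t) ∨ (∀ t, g t < t) := by
    rcases lt_trichotomy (g 0) 0 with h0 | h0 | h0
    · refine Or.inr fun t => ?_
      by_contra hc
      push_neg at hc
      have ht : t < g t := lt_of_le_of_ne hc (Ne.symm (hnofix t))
      rcases le_total t 0 with h1 | h1
      · exact hzero t 0 h1 (Or.inr ⟨by rw [hF]; linarith, by rw [hF]; linarith⟩)
      · exact hzero 0 t h1 (Or.inl ⟨by rw [hF]; linarith, by rw [hF]; linarith⟩)
    · exact absurd h0 (hnofix 0)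
    · refine Or.inl fun t => ?_
      by_contra hc
      push_neg at hc
      have ht : g t < t := lt_of_le_of_ne hc (hnofix t)
      rcases le_total t 0 with h1 | h1
      · exact hzero t 0 h1 (Or.inl ⟨by rw [hF]; linarith, by rw [hF]; linarith⟩)
      · exact hzero 0 t h1 (Or.inr ⟨by rw [hF]; linarith, by rw [hF]; linarith⟩)
  rcases hsign with hposi | hnegi
  · exact core_partition f hf w e hmono hspec hposi
  · -- use the inverse permutation and -w
    have hmono' : StrictMono ⇑e.symm := fun a b hab =>
      hmono.lt_iff_lt.mp (show g (g' a) < g (g' b) by rw [hgg', hgg']; exact hab)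
    have hspec' : ∀ (k : ℤ) (t : ℝ), f ((e.symm ^ k) t) = (k : ℝ) • (-w) + f t := by
      intro k t
      have h1 : e.symm ^ k = e ^ (-k) := by
        show e⁻¹ ^ k = e ^ (-k)
        rw [inv_zpow, ← zpow_neg]
      rw [h1, hspec (-k) t]
      push_cast
      rw [neg_smul, smul_neg]
    have hpos' : ∀ t, t < e.symm t := by
      intro t
      have := hnegi (g' t)
      rwa [show g (g' t) = t from hgg' t] at this
    obtain ⟨B, hB1, hB2, hB3⟩ := core_partition f hf (-w) e.symm hmono' hspec' hpos'
    refine ⟨B, hB1, hB2, fun x => ?_⟩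
    rw [hB3 x]
    constructor
    · rintro ⟨k, ⟨b, hb, hxb⟩, hu⟩
      refine ⟨-k, ⟨b, hb, ?_⟩, ?_⟩
      · rw [hxb]; push_cast; module
      · rintro y ⟨b', hb', hxb'⟩
        have hy : -y = k := hu (-y) ⟨b', hb', by
          rw [hxb']; push_cast; module⟩
        omega
    · rintro ⟨k, ⟨b, hb, hxb⟩, hu⟩
      refine ⟨-k, ⟨b, hb, ?_⟩, ?_⟩
      · rw [hxb]; push_cast; module
      · rintro y ⟨b', hb', hxb'⟩
        have hy : -y = k := hu (-y) ⟨b', hb', by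
          rw [hxb']; push_cast; module⟩
        omega
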